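/- With the second-order retraction R_X^{(2)}(ξ) = Z_U Z_V^T as defined via Z_U, Z_V above, one has R_X^{(2)}(ξ) = X + ξ + U_pΣ^{-1}V_p^T + O(‖ξ‖³) as ‖ξ‖ → 0; in particular the residual R_X^{(2)}(ξ) - X - ξ - U_pΣ^{-1}V_p^T has norm bounded by C‖ξ‖³ for ξ in a neighborhood of 0 in the tangent space. -/

import Mathlib

open Matrix

attribute [local instance] Matrix.frobeniusSeminormedAddCommGroup Matrix.frobeniusNormedSpace

/-- Frobenius norm via the trace inner product. -/
noncomputable def fnorm {m n : ℕ} (A : Matrix (Fin m) (Fin n) ℝ) : ℝ :=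
  Real.sqrt (trace (Aᵀ * A))

lemma fnorm_eq {m n : ℕ} (A : Matrix (Fin m) (Fin n) ℝ) : fnorm A = ‖A‖ := by
  rw [fnorm, Matrix.frobenius_norm_def, Real.sqrt_eq_rpow]
  congr 1
  rw [Matrix.trace]
  simp only [Matrix.diag, Matrix.mul_apply, Matrix.transpose_apply, Real.norm_eq_abs]
  rw [Finset.sum_comm]
  congr 1; ext i; congr 1; ext j
  rw [show ((2:ℝ)) = ((2:ℕ):ℝ) by norm_num, Real.rpow_natCast, sq_abs]
  ring

private lemma nb {a b c : ℕ} {A : Matrix (Fin a) (Fin b) ℝ} {B : Matrix (Fin b) (Fin c) ℝ}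
    {x y : ℝ} (hA : ‖A‖ ≤ x) (hB : ‖B‖ ≤ y) : ‖A * B‖ ≤ x * y :=
  le_trans (Matrix.frobenius_norm_mul A B)
    (mul_le_mul hA hB (norm_nonneg B) (le_trans (norm_nonneg A) hA))

set_option maxHeartbeats 1000000 in
/-- Second-order expansion of the retraction:
R_X^{(2)}(ξ) = X + ξ + U_pΣ⁻¹V_pᵀ + O(‖ξ‖³) as ‖ξ‖ → 0. -/
theorem second_order_retraction_taylor (m n k : ℕ)
    (U : Matrix (Fin m) (Fin k) ℝ) (V : Matrix (Fin n) (Fin k) ℝ)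
    (S Sinv : Matrix (Fin k) (Fin k) ℝ)
    (hU : Uᵀ * U = 1) (hV : Vᵀ * V = 1)
    (hS1 : S * Sinv = 1) (hS2 : Sinv * S = 1)
    (X : Matrix (Fin m) (Fin n) ℝ) (hX : X = U * S * Vᵀ) :
    ∃ C > (0 : ℝ), ∃ δ > (0 : ℝ),
      ∀ (M : Matrix (Fin k) (Fin k) ℝ) (Up : Matrix (Fin m) (Fin k) ℝ)
        (Vp : Matrix (Fin n) (Fin k) ℝ),
        Upᵀ * U = 0 → Vpᵀ * V = 0 →
        ∀ ξ : Matrix (Fin m) (Fin n) ℝ, ξ = U * M * Vᵀ + Up * Vᵀ + U * Vpᵀ →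
        fnorm ξ < δ →
        fnorm ((U * (S + (1 / 2 : ℝ) • M - (1 / 8 : ℝ) • (M * Sinv * M))
              + Up * (1 - (1 / 2 : ℝ) • (Sinv * M))) *
            (V * (1 + (1 / 2 : ℝ) • (Mᵀ * Sinvᵀ)
                - (1 / 8 : ℝ) • (Mᵀ * Sinvᵀ * Mᵀ * Sinvᵀ))
              + Vp * (Sinvᵀ - (1 / 2 : ℝ) • (Sinvᵀ * Mᵀ * Sinvᵀ)))ᵀ
            - (X + ξ + Up * Sinv * Vpᵀ))
          ≤ C * (fnorm ξ) ^ 3 := by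
  set u := ‖U‖ with hudef
  set v := ‖V‖ with hvdef
  set s := ‖Sinv‖ with hsdef
  have hu0 : 0 ≤ u := norm_nonneg U
  have hv0 : 0 ≤ v := norm_nonneg V
  have hs0 : 0 ≤ s := norm_nonneg Sinv
  set K : ℝ := (1 + u)^2 * (1 + v)^2 with hKdef
  have hK0 : 0 ≤ K := by positivity
  set A3 : ℝ := (1/8)*u*v*s^2*K^3 + (3/8)*u*s^2*K^3 + (3/8)*v*s^2*K^3 + s^2*K^3 with hA3def
  set A4 : ℝ := (1/64)*u*v*s^3*K^4 + (1/16)*u*s^3*K^4 + (1/16)*v*s^3*K^4 + (1/4)*s^3*K^4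
    with hA4def
  have hA30 : 0 ≤ A3 := by positivity
  have hA40 : 0 ≤ A4 := by positivity
  refine ⟨A3 + A4 + 1, by positivity, 1, one_pos, ?_⟩
  intro M Up Vp hUp0 hVp0 ξ hξ hlt
  simp only [fnorm_eq] at hlt ⊢
  set t := ‖ξ‖ with htdef
  have ht0 : 0 ≤ t := norm_nonneg ξ
  -- orthogonality consequences
  have hUpU : Uᵀ * Up = 0 := by
    have h := congrArg Matrix.transpose hUp0
    simpa [Matrix.transpose_mul] using h
  have hcolU : ∀ p (B : Matrix (Fin k) (Fin p) ℝ), Uᵀ * (U * B) = B := by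
    intro p B; rw [← Matrix.mul_assoc, hU, Matrix.one_mul]
  have hcolUp : ∀ p (B : Matrix (Fin k) (Fin p) ℝ), Uᵀ * (Up * B) = 0 := by
    intro p B; rw [← Matrix.mul_assoc, hUpU, Matrix.zero_mul]
  have hξV : ξ * V = U * M + Up := by
    rw [hξ]
    simp only [Matrix.add_mul, Matrix.mul_assoc, hV, hVp0, Matrix.mul_one, Matrix.mul_zero,
      add_zero]
  have hUξ : Uᵀ * ξ = M * Vᵀ + Vpᵀ := by
    rw [hξ]
    simp only [Matrix.mul_add, Matrix.mul_assoc, hcolU, hcolUp, add_zero, zero_add]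
  have hMeq : M = Uᵀ * (ξ * V) := by
    rw [hξV, Matrix.mul_add, ← Matrix.mul_assoc, hU, Matrix.one_mul, hUpU, add_zero]
  have hUpeq : Up = ξ * V - U * M := by rw [hξV]; rw [add_sub_cancel_left]
  have hVpeq : Vpᵀ = Uᵀ * ξ - M * Vᵀ := by rw [hUξ]; rw [add_sub_cancel_left]
  have hVt : ‖Vᵀ‖ ≤ v := le_of_eq (Matrix.frobenius_norm_transpose V)
  have hUt : ‖Uᵀ‖ ≤ u := le_of_eq (Matrix.frobenius_norm_transpose U)
  -- basic norm bounds
  have hM0 : ‖M‖ ≤ u * (t * v) := by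
    rw [hMeq]; exact nb hUt (nb (le_refl t) (le_refl v))
  have huK : (1:ℝ) + u^2 ≤ (1 + u)^2 := by nlinarith only [hu0]
  have hvK : (1:ℝ) + v^2 ≤ (1 + v)^2 := by nlinarith only [hv0]
  have huK' : u ≤ (1 + u)^2 := by nlinarith only [hu0]
  have hvK' : v ≤ (1 + v)^2 := by nlinarith only [hv0]
  have hnM : ‖M‖ ≤ K * t := by
    have h1 : u * v ≤ K := by
      rw [hKdef]; exact mul_le_mul huK' hvK' hv0 (by positivity)
    calc ‖M‖ ≤ u * (t * v) := hM0
      _ = (u * v) * t := by ring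
      _ ≤ K * t := mul_le_mul_of_nonneg_right h1 ht0
  have hnUp : ‖Up‖ ≤ K * t := by
    have h2 : v * (1 + u^2) ≤ K := by
      rw [hKdef]
      exact le_trans (mul_le_mul hvK' huK (by positivity) (by positivity))
        (le_of_eq (by ring))
    calc ‖Up‖ = ‖ξ * V - U * M‖ := by rw [← hUpeq]
      _ ≤ ‖ξ * V‖ + ‖U * M‖ := norm_sub_le _ _
      _ ≤ t * v + u * (u * (t * v)) :=
        add_le_add (nb (le_refl t) (le_refl v)) (nb (le_refl u) hM0)
      _ = (v * (1 + u^2)) * t := by ring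
      _ ≤ K * t := mul_le_mul_of_nonneg_right h2 ht0
  have hnVp : ‖Vpᵀ‖ ≤ K * t := by
    have h3 : u * (1 + v^2) ≤ K := by
      rw [hKdef]
      exact mul_le_mul huK' hvK (by positivity) (by positivity)
    calc ‖Vpᵀ‖ = ‖Uᵀ * ξ - M * Vᵀ‖ := by rw [← hVpeq]
      _ ≤ ‖Uᵀ * ξ‖ + ‖M * Vᵀ‖ := norm_sub_le _ _
      _ ≤ u * t + (u * (t * v)) * v :=
        add_le_add (nb hUt (le_refl t)) (nb hM0 hVt)
      _ = (u * (1 + v^2)) * t := by ring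
      _ ≤ K * t := mul_le_mul_of_nonneg_right h3 ht0
  -- the algebraic identity
  have hS1' : ∀ p (B : Matrix (Fin k) (Fin p) ℝ), S * (Sinv * B) = B := by
    intro p B; rw [← Matrix.mul_assoc, hS1, Matrix.one_mul]
  have hS2' : ∀ p (B : Matrix (Fin k) (Fin p) ℝ), Sinv * (S * B) = B := by
    intro p B; rw [← Matrix.mul_assoc, hS2, Matrix.one_mul]
  have key : (U * (S + (1 / 2 : ℝ) • M - (1 / 8 : ℝ) • (M * Sinv * M))
              + Up * (1 - (1 / 2 : ℝ) • (Sinv * M))) *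
            (V * (1 + (1 / 2 : ℝ) • (Mᵀ * Sinvᵀ)
                - (1 / 8 : ℝ) • (Mᵀ * Sinvᵀ * Mᵀ * Sinvᵀ))
              + Vp * (Sinvᵀ - (1 / 2 : ℝ) • (Sinvᵀ * Mᵀ * Sinvᵀ)))ᵀ
            - (X + ξ + Up * Sinv * Vpᵀ)
      = -((1/8:ℝ) • (U*M*Sinv*M*Sinv*M*Vᵀ))
        + (1/64:ℝ) • (U*M*Sinv*M*Sinv*M*Sinv*M*Vᵀ)
        + -((3/8:ℝ) • (U*M*Sinv*M*Sinv*Vpᵀ))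
        + (1/16:ℝ) • (U*M*Sinv*M*Sinv*M*Sinv*Vpᵀ)
        + -((3/8:ℝ) • (Up*Sinv*M*Sinv*M*Vᵀ))
        + (1/16:ℝ) • (Up*Sinv*M*Sinv*M*Sinv*M*Vᵀ)
        + -(Up*Sinv*M*Sinv*Vpᵀ)
        + (1/4:ℝ) • (Up*Sinv*M*Sinv*M*Sinv*Vpᵀ) := by
    rw [hX, hξ]
    simp only [transpose_add, transpose_sub, transpose_mul, transpose_smul, transpose_one,
      transpose_transpose, Matrix.mul_add, Matrix.add_mul, Matrix.mul_sub, Matrix.sub_mul,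
      Matrix.mul_one, Matrix.one_mul, Matrix.smul_mul, Matrix.mul_smul, smul_smul,
      smul_add, smul_sub, Matrix.mul_assoc, hS1', hS2', hS1, hS2]
    module
  rw [key]
  -- bounds on the eight residual terms
  have hb1 : ‖-((1/8:ℝ) • (U*M*Sinv*M*Sinv*M*Vᵀ))‖
      ≤ (1/8) * (u*(K*t)*s*(K*t)*s*(K*t)*v) := by
    rw [norm_neg, norm_smul, Real.norm_eq_abs, abs_of_pos (by norm_num : (0:ℝ) < 1/8)]
    exact mul_le_mul_of_nonneg_left
      (nb (nb (nb (nb (nb (nb (le_refl u) hnM) (le_refl s)) hnM) (le_refl s)) hnM) hVt)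
      (by norm_num)
  have hb2 : ‖(1/64:ℝ) • (U*M*Sinv*M*Sinv*M*Sinv*M*Vᵀ)‖
      ≤ (1/64) * (u*(K*t)*s*(K*t)*s*(K*t)*s*(K*t)*v) := by
    rw [norm_smul, Real.norm_eq_abs, abs_of_pos (by norm_num : (0:ℝ) < 1/64)]
    exact mul_le_mul_of_nonneg_left
      (nb (nb (nb (nb (nb (nb (nb (nb (le_refl u) hnM) (le_refl s)) hnM) (le_refl s)) hnM)
        (le_refl s)) hnM) hVt)
      (by norm_num)
  have hb3 : ‖-((3/8:ℝ) • (U*M*Sinv*M*Sinv*Vpᵀ))‖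
      ≤ (3/8) * (u*(K*t)*s*(K*t)*s*(K*t)) := by
    rw [norm_neg, norm_smul, Real.norm_eq_abs, abs_of_pos (by norm_num : (0:ℝ) < 3/8)]
    exact mul_le_mul_of_nonneg_left
      (nb (nb (nb (nb (nb (le_refl u) hnM) (le_refl s)) hnM) (le_refl s)) hnVp)
      (by norm_num)
  have hb4 : ‖(1/16:ℝ) • (U*M*Sinv*M*Sinv*M*Sinv*Vpᵀ)‖
      ≤ (1/16) * (u*(K*t)*s*(K*t)*s*(K*t)*s*(K*t)) := by
    rw [norm_smul, Real.norm_eq_abs, abs_of_pos (by norm_num : (0:ℝ) < 1/16)]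
    exact mul_le_mul_of_nonneg_left
      (nb (nb (nb (nb (nb (nb (nb (le_refl u) hnM) (le_refl s)) hnM) (le_refl s)) hnM)
        (le_refl s)) hnVp)
      (by norm_num)
  have hb5 : ‖-((3/8:ℝ) • (Up*Sinv*M*Sinv*M*Vᵀ))‖
      ≤ (3/8) * ((K*t)*s*(K*t)*s*(K*t)*v) := by
    rw [norm_neg, norm_smul, Real.norm_eq_abs, abs_of_pos (by norm_num : (0:ℝ) < 3/8)]
    exact mul_le_mul_of_nonneg_left
      (nb (nb (nb (nb (nb hnUp (le_refl s)) hnM) (le_refl s)) hnM) hVt)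
      (by norm_num)
  have hb6 : ‖(1/16:ℝ) • (Up*Sinv*M*Sinv*M*Sinv*M*Vᵀ)‖
      ≤ (1/16) * ((K*t)*s*(K*t)*s*(K*t)*s*(K*t)*v) := by
    rw [norm_smul, Real.norm_eq_abs, abs_of_pos (by norm_num : (0:ℝ) < 1/16)]
    exact mul_le_mul_of_nonneg_left
      (nb (nb (nb (nb (nb (nb (nb hnUp (le_refl s)) hnM) (le_refl s)) hnM) (le_refl s)) hnM)
        hVt)
      (by norm_num)
  have hb7 : ‖-(Up*Sinv*M*Sinv*Vpᵀ)‖ ≤ (K*t)*s*(K*t)*s*(K*t) := by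
    rw [norm_neg]
    exact nb (nb (nb (nb hnUp (le_refl s)) hnM) (le_refl s)) hnVp
  have hb8 : ‖(1/4:ℝ) • (Up*Sinv*M*Sinv*M*Sinv*Vpᵀ)‖
      ≤ (1/4) * ((K*t)*s*(K*t)*s*(K*t)*s*(K*t)) := by
    rw [norm_smul, Real.norm_eq_abs, abs_of_pos (by norm_num : (0:ℝ) < 1/4)]
    exact mul_le_mul_of_nonneg_left
      (nb (nb (nb (nb (nb (nb hnUp (le_refl s)) hnM) (le_refl s)) hnM) (le_refl s)) hnVp)
      (by norm_num)
  have ht43 : t^4 ≤ t^3 := pow_le_pow_of_le_one ht0 hlt.le (by norm_num)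
  have ht3 : 0 ≤ t^3 := by positivity
  calc ‖_ + _‖
      ≤ (1/8) * (u*(K*t)*s*(K*t)*s*(K*t)*v)
        + (1/64) * (u*(K*t)*s*(K*t)*s*(K*t)*s*(K*t)*v)
        + (3/8) * (u*(K*t)*s*(K*t)*s*(K*t))
        + (1/16) * (u*(K*t)*s*(K*t)*s*(K*t)*s*(K*t))
        + (3/8) * ((K*t)*s*(K*t)*s*(K*t)*v)
        + (1/16) * ((K*t)*s*(K*t)*s*(K*t)*s*(K*t)*v)
        + ((K*t)*s*(K*t)*s*(K*t))
        + (1/4) * ((K*t)*s*(K*t)*s*(K*t)*s*(K*t)) := by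
        refine le_trans (norm_add_le _ _) (add_le_add ?_ hb8)
        refine le_trans (norm_add_le _ _) (add_le_add ?_ hb7)
        refine le_trans (norm_add_le _ _) (add_le_add ?_ hb6)
        refine le_trans (norm_add_le _ _) (add_le_add ?_ hb5)
        refine le_trans (norm_add_le _ _) (add_le_add ?_ hb4)
        refine le_trans (norm_add_le _ _) (add_le_add ?_ hb3)
        exact le_trans (norm_add_le _ _) (add_le_add hb1 hb2)
    _ = A3 * t^3 + A4 * t^4 := by rw [hA3def, hA4def]; ring
    _ ≤ A3 * t^3 + A4 * t^3 := add_le_add_right (mul_le_mul_of_nonneg_left ht43 hA40) _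
    _ = (A3 + A4) * t^3 := by ring
    _ ≤ (A3 + A4 + 1) * t^3 := mul_le_mul_of_nonneg_right (by linarith) ht3
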